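/- Let f(z, w) be a polynomial in z, w, z̄, w̄ and h continuous on the closed bidisc with f·h = 0 on the full topological boundary b𝔻² of the bidisc. Then (f = 0 on 𝕋 × closure(𝔻) or h = 0 on 𝕋 × closure(𝔻)) and (f = 0 on closure(𝔻) × 𝕋 or h = 0 on closure(𝔻) × 𝕋). -/

import Mathlib

open MvPolynomial ComplexConjugate Metric Filter Set

private lemma entire_zero_of_real_interval {f : ℂ → ℂ} (hf : Differentiable ℂ f)
    {c ε : ℝ} (hε : 0 < ε) (hv : ∀ t : ℝ, |t - c| < ε → f t = 0) : ∀ z, f z = 0 := by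
  have h0 : AnalyticOnNhd ℂ f Set.univ := fun z _ => hf.analyticAt z
  have hfreq : ∃ᶠ z in nhdsWithin (c : ℂ) {(c : ℂ)}ᶜ, f z = 0 := by
    rw [Filter.frequently_iff]
    intro U hU
    rcases Metric.mem_nhdsWithin_iff.1 hU with ⟨δ, hδ, hsub⟩
    set m : ℝ := min δ ε / 2 with hm
    have hm0 : 0 < m := by positivity
    have hmδ : m < δ := by
      have := min_le_left δ ε; simp only [hm]; linarith
    have hmε : m < ε := by
      have := min_le_right δ ε; simp only [hm]; linarith
    refine ⟨((c + m : ℝ) : ℂ), hsub ⟨?_, ?_⟩, hv (c + m) (by rw [add_sub_cancel_left, abs_of_pos hm0]; exact hmε)⟩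
    · rw [mem_ball]
      have : dist ((c + m : ℝ) : ℂ) ((c : ℝ) : ℂ) = dist (c + m) c := Complex.isometry_ofReal.dist_eq _ _
      rw [this, Real.dist_eq, add_sub_cancel_left, abs_of_pos hm0]
      exact hmδ
    · simp only [Set.mem_compl_iff, Set.mem_singleton_iff]
      intro hcon
      have : (c + m : ℝ) = c := by exact_mod_cast hcon
      linarith
  have := h0.eqOn_zero_of_preconnected_of_frequently_eq_zero isPreconnected_univ
    (Set.mem_univ (c : ℂ)) hfreq
  exact fun z => this (Set.mem_univ z)

private lemma diff_eval {n : ℕ} (P : MvPolynomial (Fin n) ℂ) {g : ℂ → Fin n → ℂ}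
    (hg : ∀ i, Differentiable ℂ (fun u => g u i)) :
    Differentiable ℂ (fun u => eval (g u) P) := by
  induction P using MvPolynomial.induction_on with
  | C a => simp only [eval_C]; exact differentiable_const a
  | add p q hp hq => simp only [map_add]; exact hp.add hq
  | mul_X p i hp => simp only [map_mul, eval_X]; exact hp.mul (hg i)

private noncomputable def Gf (P : MvPolynomial (Fin 4) ℂ) (u v s : ℂ) : ℂ :=
  eval ![Complex.exp (u * Complex.I), v + s * Complex.I,
         Complex.exp (-(u * Complex.I)), v - s * Complex.I] P

private lemma Gf_diff1 (P : MvPolynomial (Fin 4) ℂ) (v s : ℂ) :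
    Differentiable ℂ (fun u => Gf P u v s) := by
  apply diff_eval
  intro i
  fin_cases i <;> simp <;> fun_prop

private lemma Gf_diff2 (P : MvPolynomial (Fin 4) ℂ) (u s : ℂ) :
    Differentiable ℂ (fun v => Gf P u v s) := by
  apply diff_eval
  intro i
  fin_cases i <;> simp <;> fun_prop

private lemma Gf_diff3 (P : MvPolynomial (Fin 4) ℂ) (u v : ℂ) :
    Differentiable ℂ (fun s => Gf P u v s) := by
  apply diff_eval
  intro i
  fin_cases i <;> simp <;> fun_prop

private lemma Gf_real (P : MvPolynomial (Fin 4) ℂ) (θ x y : ℝ) :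
    eval ![Complex.exp (θ * Complex.I), (x : ℂ) + y * Complex.I,
      conj (Complex.exp ((θ : ℂ) * Complex.I)), conj ((x : ℂ) + y * Complex.I)] P
      = Gf P θ x y := by
  have h1 : conj (Complex.exp ((θ : ℂ) * Complex.I)) = Complex.exp (-((θ : ℂ) * Complex.I)) := by
    rw [← Complex.exp_conj]; simp [Complex.conj_I]
  have h2 : conj ((x : ℂ) + y * Complex.I) = (x : ℂ) - y * Complex.I := by
    simp [Complex.conj_I]; ring
  rw [Gf, h1, h2]

private lemma Gf_zero_of_box (P : MvPolynomial (Fin 4) ℂ) {θ₁ x₁ y₁ ε : ℝ} (hε : 0 < ε)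
    (hbox : ∀ θ x y : ℝ, |θ - θ₁| < ε → |x - x₁| < ε → |y - y₁| < ε → Gf P θ x y = 0) :
    ∀ u v s : ℂ, Gf P u v s = 0 := by
  have s1 : ∀ (u : ℂ) (x y : ℝ), |x - x₁| < ε → |y - y₁| < ε → Gf P u x y = 0 := by
    intro u x y hx hy
    exact entire_zero_of_real_interval (Gf_diff1 P x y) hε (fun t ht => hbox t x y ht hx hy) u
  have s2 : ∀ (u v : ℂ) (y : ℝ), |y - y₁| < ε → Gf P u v y = 0 := by
    intro u v y hy
    exact entire_zero_of_real_interval (Gf_diff2 P u y) hε (fun t ht => s1 u t y ht hy) v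
  intro u v s
  exact entire_zero_of_real_interval (Gf_diff3 P u v) hε (fun t ht => s2 u v t ht) s

private lemma key (P : MvPolynomial (Fin 4) ℂ) (h : ℂ × ℂ → ℂ)
    (hc : ContinuousOn h (closedBall (0 : ℂ) 1 ×ˢ closedBall (0 : ℂ) 1))
    (hzero : ∀ ξ w : ℂ, ‖ξ‖ = 1 → ‖w‖ ≤ 1 →
      eval ![ξ, w, conj ξ, conj w] P * h (ξ, w) = 0) :
    (∀ ξ w : ℂ, ‖ξ‖ = 1 → ‖w‖ ≤ 1 → eval ![ξ, w, conj ξ, conj w] P = 0) ∨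
    (∀ ξ w : ℂ, ‖ξ‖ = 1 → ‖w‖ ≤ 1 → h (ξ, w) = 0) := by
  set S : Set (ℂ × ℂ) := closedBall (0 : ℂ) 1 ×ˢ closedBall (0 : ℂ) 1 with hS
  by_cases hF : ∀ ξ w : ℂ, ‖ξ‖ = 1 → ‖w‖ ≤ 1 → eval ![ξ, w, conj ξ, conj w] P = 0
  · exact Or.inl hF
  right
  push_neg at hF
  obtain ⟨ξ₀, w₀, hξ₀, hw₀, hP0⟩ := hF
  -- h vanishes on the open part of the face
  have hopen : ∀ (θ : ℝ) (w : ℂ), ‖w‖ < 1 → h (Complex.exp (θ * Complex.I), w) = 0 := by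
    intro θ₁ w₁ hw₁
    by_contra hne
    set p : ℂ × ℂ := (Complex.exp ((θ₁ : ℂ) * Complex.I), w₁) with hp
    have hp1 : ‖p.1‖ = 1 := by
      simp [hp, Complex.norm_exp_ofReal_mul_I]
    have hpmem : p ∈ S := by
      constructor <;> rw [mem_closedBall_zero_iff]
      · exact le_of_eq hp1
      · exact le_of_lt hw₁
    have hev : {q | h q ≠ 0} ∈ nhdsWithin p S :=
      (hc p hpmem) (isOpen_ne.mem_nhds hne)
    rcases Metric.mem_nhdsWithin_iff.1 hev with ⟨δ, hδ, hδsub⟩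
    -- find a box mapping into ball p δ with |w| < 1
    have hcont : ContinuousAt (fun q : ℝ × ℝ × ℝ =>
        ((Complex.exp ((q.1 : ℂ) * Complex.I), (q.2.1 : ℂ) + (q.2.2 : ℂ) * Complex.I) : ℂ × ℂ))
        (θ₁, w₁.re, w₁.im) := by fun_prop
    have hopenU : IsOpen (ball p δ ∩ (univ ×ˢ ball (0 : ℂ) 1)) :=
      isOpen_ball.inter (isOpen_univ.prod isOpen_ball)
    have himg : ((Complex.exp ((θ₁ : ℂ) * Complex.I), (w₁.re : ℂ) + (w₁.im : ℂ) * Complex.I) : ℂ × ℂ)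
        ∈ ball p δ ∩ (univ ×ˢ ball (0 : ℂ) 1) := by
      rw [Complex.re_add_im]
      exact ⟨mem_ball_self hδ, ⟨mem_univ _, mem_ball_zero_iff.2 hw₁⟩⟩
    have hnhds := hcont.preimage_mem_nhds (hopenU.mem_nhds himg)
    rcases Metric.mem_nhds_iff.1 hnhds with ⟨ε, hε, hball⟩
    have hbox : ∀ θ x y : ℝ, |θ - θ₁| < ε → |x - w₁.re| < ε → |y - w₁.im| < ε →
        Gf P θ x y = 0 := by
      intro θ x y h1 h2 h3
      have hmem : ((θ, x, y) : ℝ × ℝ × ℝ) ∈ ball (θ₁, w₁.re, w₁.im) ε := by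
        rw [mem_ball, Prod.dist_eq, Prod.dist_eq]
        simp only [Real.dist_eq]
        exact max_lt h1 (max_lt h2 h3)
      have hq := hball hmem
      set q : ℂ × ℂ := (Complex.exp ((θ : ℂ) * Complex.I), (x : ℂ) + (y : ℂ) * Complex.I) with hqdef
      have hq1 : ‖q.1‖ = 1 := by
        simp [hqdef, Complex.norm_exp_ofReal_mul_I]
      have hq2' : ‖q.2‖ < 1 := mem_ball_zero_iff.1 hq.2.2
      have hqS : q ∈ S := by
        constructor <;> rw [mem_closedBall_zero_iff]
        · exact le_of_eq hq1
        · exact le_of_lt hq2'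
      have hhq : h q ≠ 0 := hδsub ⟨hq.1, hqS⟩
      have hmul := hzero q.1 q.2 hq1 (le_of_lt hq2')
      have : eval ![q.1, q.2, conj q.1, conj q.2] P = 0 := by
        rcases mul_eq_zero.1 hmul with h' | h'
        · exact h'
        · exact absurd h' hhq
      rw [← Gf_real]
      exact this
    have hG := Gf_zero_of_box P hε hbox
    -- contradiction with (ξ₀, w₀)
    obtain ⟨θ₀, hθ₀⟩ : ∃ θ₀ : ℝ, Complex.exp ((θ₀ : ℂ) * Complex.I) = ξ₀ := by
      refine ⟨Complex.arg ξ₀, ?_⟩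
      have := Complex.norm_mul_exp_arg_mul_I ξ₀
      rwa [show ((‖ξ₀‖ : ℝ) : ℂ) = 1 by rw [hξ₀]; norm_num,
        one_mul] at this
    apply hP0
    have := hG θ₀ w₀.re w₀.im
    rw [← Gf_real, hθ₀, Complex.re_add_im] at this
    exact this
  -- conclude for all boundary points of the face
  intro ξ w hξ hw
  obtain ⟨θ, hθ⟩ : ∃ θ : ℝ, Complex.exp ((θ : ℂ) * Complex.I) = ξ := by
    refine ⟨Complex.arg ξ, ?_⟩
    have := Complex.norm_mul_exp_arg_mul_I ξ
    rwa [show ((‖ξ‖ : ℝ) : ℂ) = 1 by rw [hξ]; norm_num,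
      one_mul] at this
  rcases lt_or_eq_of_le hw with hlt | heq
  · rw [← hθ]; exact hopen θ w hlt
  · have hmem : ((ξ, w) : ℂ × ℂ) ∈ S := by
      constructor <;> rw [mem_closedBall_zero_iff]
      · exact le_of_eq hξ
      · exact hw
    have hIoo : Ioo (0 : ℝ) 1 ∈ nhdsWithin (1 : ℝ) (Iio 1) :=
      Ioo_mem_nhdsLT zero_lt_one
    have htend : Tendsto (fun t : ℝ => ((ξ, (t : ℂ) * w) : ℂ × ℂ))
        (nhdsWithin (1 : ℝ) (Iio 1)) (nhdsWithin (ξ, w) S) := by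
      rw [tendsto_nhdsWithin_iff]
      constructor
      · have : ContinuousAt (fun t : ℝ => ((ξ, (t : ℂ) * w) : ℂ × ℂ)) 1 := by fun_prop
        have h1 := this.tendsto
        simp only [Complex.ofReal_one, one_mul] at h1
        exact h1.mono_left nhdsWithin_le_nhds
      · filter_upwards [hIoo] with t ht
        constructor <;> rw [mem_closedBall_zero_iff]
        · exact le_of_eq hξ
        · rw [norm_mul, Complex.norm_real, Real.norm_eq_abs, abs_of_pos ht.1, heq, mul_one]
          exact le_of_lt ht.2
    have h2 : Tendsto (fun t : ℝ => h (ξ, (t : ℂ) * w)) (nhdsWithin (1 : ℝ) (Iio 1))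
        (nhds (h (ξ, w))) := (hc _ hmem).tendsto.comp htend
    have h3 : ∀ᶠ t : ℝ in nhdsWithin (1 : ℝ) (Iio (1 : ℝ)), h (ξ, (t : ℂ) * w) = 0 := by
      filter_upwards [hIoo] with t ht
      rw [← hθ]
      apply hopen
      rw [norm_mul, Complex.norm_real, Real.norm_eq_abs, abs_of_pos ht.1, heq, mul_one]
      exact ht.2
    have h4 : Tendsto (fun _ : ℝ => (0 : ℂ)) (nhdsWithin (1 : ℝ) (Iio 1)) (nhds (h (ξ, w))) :=
      h2.congr' (h3.mono fun t ht => ht)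
    exact tendsto_nhds_unique h4 tendsto_const_nhds

theorem symbol_vanishing_on_bidisc_boundary
    (P : MvPolynomial (Fin 4) ℂ) (h : ℂ × ℂ → ℂ)
    (hc : ContinuousOn h (closedBall (0 : ℂ) 1 ×ˢ closedBall (0 : ℂ) 1))
    (hzero : ∀ z w : ℂ, ‖z‖ ≤ 1 → ‖w‖ ≤ 1 → (‖z‖ = 1 ∨ ‖w‖ = 1) →
      eval ![z, w, conj z, conj w] P * h (z, w) = 0) :
    ((∀ ξ w : ℂ, ‖ξ‖ = 1 → ‖w‖ ≤ 1 → eval ![ξ, w, conj ξ, conj w] P = 0) ∨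
      (∀ ξ w : ℂ, ‖ξ‖ = 1 → ‖w‖ ≤ 1 → h (ξ, w) = 0)) ∧
    ((∀ z ξ : ℂ, ‖z‖ ≤ 1 → ‖ξ‖ = 1 → eval ![z, ξ, conj z, conj ξ] P = 0) ∨
      (∀ z ξ : ℂ, ‖z‖ ≤ 1 → ‖ξ‖ = 1 → h (z, ξ) = 0)) := by
  constructor
  · exact key P h hc fun ξ w hξ hw => hzero ξ w (le_of_eq hξ) hw (Or.inl hξ)
  · set Q : MvPolynomial (Fin 4) ℂ := rename (![1, 0, 3, 2] : Fin 4 → Fin 4) P with hQ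
    set h' : ℂ × ℂ → ℂ := fun q => h (q.2, q.1) with hh'
    have hswap : ∀ ξ z : ℂ, eval ![ξ, z, conj ξ, conj z] Q = eval ![z, ξ, conj z, conj ξ] P := by
      intro ξ z
      rw [hQ, eval_rename]
      have : (![ξ, z, conj ξ, conj z] ∘ ![1, 0, 3, 2] : Fin 4 → ℂ)
          = ![z, ξ, conj z, conj ξ] := by
        funext i
        fin_cases i <;> simp
      rw [this]
    have hc' : ContinuousOn h' (closedBall (0 : ℂ) 1 ×ˢ closedBall (0 : ℂ) 1) := by
      apply hc.comp (Continuous.continuousOn (by fun_prop))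
      intro q hq
      exact ⟨hq.2, hq.1⟩
    have hz' : ∀ ξ w : ℂ, ‖ξ‖ = 1 → ‖w‖ ≤ 1 →
        eval ![ξ, w, conj ξ, conj w] Q * h' (ξ, w) = 0 := by
      intro ξ w hξ hw
      rw [hswap]
      exact hzero w ξ hw (le_of_eq hξ) (Or.inr hξ)
    rcases key Q h' hc' hz' with hl | hr
    · left; intro z ξ hz hξ
      rw [← hswap]; exact hl ξ z hξ hz
    · right; intro z ξ hz hξ
      exact hr ξ z hξ hz
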